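/- arXiv:2209.00885 — 2 statements merged into one kernel-verified Lean document; each statement's English description precedes it below -/
import Mathlib

section
/- Let f : [0,1] → ℝ be a convex function attaining its minimum at a point x* ∈ (0,1). Let 0 ≤ l < c < r < x* with x* − l ≤ 2(r − l). Suppose J_l = [a_l, b_l], J_c = [a_c, b_c], J_r = [a_r, b_r] are compact real intervals with f(l) ∈ J_l, f(c) ∈ J_c, f(r) ∈ J_r, and J_l ∩ J_c ∩ J_r ≠ ∅. Then max{f(l), f(c), f(r)} − f(x*) ≤ 4 · max{b_l − a_l, b_c − a_c, b_r − a_r}. -/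
/-- Analytic core of Claim 1: if the three fuzzy evaluations of a convex
`f : [0,1] → ℝ` at the query points `l < c < r` (all left of the minimizer
`x*`, with `x* − l ≤ 2(r − l)`) still overlap, then the suboptimality of all
three query points is at most four times the largest fuzziness. -/
theorem claim1_core
    (f : ℝ → ℝ) (hf : ConvexOn ℝ (Set.Icc (0 : ℝ) 1) f)
    (xstar : ℝ) (hxstar : xstar ∈ Set.Ioo (0 : ℝ) 1)
    (hmin : ∀ y ∈ Set.Icc (0 : ℝ) 1, f xstar ≤ f y)
    (l c r : ℝ) (hl : 0 ≤ l) (hlc : l < c) (hcr : c < r) (hrx : r < xstar)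
    (hclose : xstar - l ≤ 2 * (r - l))
    (al bl ac bc ar br : ℝ)
    (hJl : al ≤ bl) (hJc : ac ≤ bc) (hJr : ar ≤ br)
    (hfl : f l ∈ Set.Icc al bl) (hfc : f c ∈ Set.Icc ac bc)
    (hfr : f r ∈ Set.Icc ar br)
    (hcap : (Set.Icc al bl ∩ Set.Icc ac bc ∩ Set.Icc ar br).Nonempty) :
    max (max (f l) (f c)) (f r) - f xstar ≤
      4 * max (max (bl - al) (bc - ac)) (br - ar) := by
  obtain ⟨hx0, hx1⟩ := hxstar
  have hmemL : l ∈ Set.Icc (0:ℝ) 1 := ⟨hl, by linarith⟩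
  have hmemC : c ∈ Set.Icc (0:ℝ) 1 := ⟨by linarith, by linarith⟩
  have hmemR : r ∈ Set.Icc (0:ℝ) 1 := ⟨by linarith, by linarith⟩
  have hmemX : xstar ∈ Set.Icc (0:ℝ) 1 := ⟨hx0.le, hx1.le⟩
  obtain ⟨t, ⟨⟨htl1, htl2⟩, htc1, htc2⟩, htr1, htr2⟩ := hcap
  set M := max (max (bl - al) (bc - ac)) (br - ar) with hM
  have hMl : bl - al ≤ M := le_trans (le_max_left _ _) (le_max_left _ _)
  have hMr : br - ar ≤ M := le_max_right _ _
  -- f c ≤ max (f l) (f xstar) = f l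
  have hfxl : f xstar ≤ f l := hmin l hmemL
  have hfxc : f xstar ≤ f c := hmin c hmemC
  have hfxr : f xstar ≤ f r := hmin r hmemR
  have hcl : f c ≤ f l := by
    have hseg : c ∈ segment ℝ l xstar := by
      rw [segment_eq_Icc (by linarith)]
      exact ⟨hlc.le, by linarith⟩
    have := hf.le_on_segment hmemL hmemX hseg
    simpa [max_eq_left hfxl] using this
  have hrl : f r ≤ f l := by
    have hseg : r ∈ segment ℝ l xstar := by
      rw [segment_eq_Icc (by linarith)]
      exact ⟨by linarith, hrx.le⟩
    have := hf.le_on_segment hmemL hmemX hseg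
    simpa [max_eq_left hfxl] using this
  have hmaxeq : max (max (f l) (f c)) (f r) = f l := by
    rw [max_eq_left hcl, max_eq_left hrl]
  rw [hmaxeq]
  -- f l - f r ≤ 2M
  have hdiff : f l - f r ≤ 2 * M := by
    have h1 : f l - t ≤ bl - al := by
      have := hfl.2; linarith
    have h2 : t - f r ≤ br - ar := by
      have := hfr.1; linarith
    linarith
  -- slope inequality between l, r, xstar
  have hslope := hf.slope_mono_adjacent hmemL hmemX (hlc.trans hcr) hrx
  rw [div_le_div_iff₀ (by linarith) (by linarith)] at hslope
  nlinarith [mul_le_mul_of_nonneg_left hclose (sub_nonneg.2 hrl),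
    mul_le_mul_of_nonneg_right hdiff (sub_pos.2 (hlc.trans hcr)).le,
    sub_pos.2 (hlc.trans hcr)]
end

section
/- Fix x ∈ (0,1) and an integer m ≥ 1. For n ∈ ℕ let A_n := {k/2^n : k ∈ {1, …, 2^n − 1}} be the dyadic mesh of index n in (0,1). Suppose A_{m−1} ∩ (0, x] contains at least 4 elements (hence so does A_m ∩ (0, x], since A_{m−1} ⊆ A_m). Let p be the 4th largest element of A_m ∩ (0, x] and p' be the 4th largest element of A_{m−1} ∩ (0, x]. Then x − p ≤ (4/7)(x − p'). Symmetrically, if A_{m−1} ∩ [x, 1) contains at least 4 elements, and q, q' denote the 4th smallest elements of A_m ∩ [x, 1) and A_{m−1} ∩ [x, 1) respectively, then q − x ≤ (4/7)(q' − x). -/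
/-- The dyadic mesh of index `n` in `(0,1)`: the points `k / 2^n` for
`k ∈ {1, …, 2^n − 1}`. -/
def dyadicMesh (n : ℕ) : Set ℝ :=
  {y | ∃ k : ℕ, 1 ≤ k ∧ k ≤ 2 ^ n - 1 ∧ y = (k : ℝ) / 2 ^ n}

lemma fmono (n : ℕ) : StrictMono (fun k : ℕ => (k : ℝ) / 2 ^ n) := by
  intro a b h
  have h2 : (0:ℝ) < (2:ℝ) ^ n := by positivity
  exact div_lt_div_of_pos_right (by exact_mod_cast h) h2

lemma mesh_Ioc (n : ℕ) (x : ℝ) (hx0 : 0 < x) (hx1 : x < 1) :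
    dyadicMesh n ∩ Set.Ioc 0 x
      = (fun k : ℕ => (k : ℝ) / 2 ^ n) '' Set.Icc 1 ⌊x * 2 ^ n⌋₊ := by
  have h2 : (0:ℝ) < (2:ℝ) ^ n := by positivity
  ext y
  simp only [dyadicMesh, Set.mem_inter_iff, Set.mem_setOf_eq, Set.mem_Ioc,
    Set.mem_image, Set.mem_Icc]
  constructor
  · rintro ⟨⟨k, hk1, hk2, rfl⟩, hy0, hyx⟩
    refine ⟨k, ⟨hk1, Nat.le_floor ?_⟩, rfl⟩
    calc (k:ℝ) = (k:ℝ)/2^n * 2^n := by field_simp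
    _ ≤ x * 2^n := by exact mul_le_mul_of_nonneg_right hyx h2.le
  · rintro ⟨k, ⟨hk1, hk2⟩, rfl⟩
    have hkx : (k:ℝ) ≤ x * 2^n := by
      exact_mod_cast (Nat.le_floor_iff (by positivity)).mp hk2
    have hk2n : (k:ℝ) < 2^n := lt_of_le_of_lt hkx (by nlinarith)
    refine ⟨⟨k, hk1, ?_, rfl⟩, by positivity, by rw [div_le_iff₀ h2]; exact hkx⟩
    have : k < 2^n := by exact_mod_cast hk2n
    omega

lemma mesh_Ico (n : ℕ) (x : ℝ) (hx0 : 0 < x) (hx1 : x < 1) :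
    dyadicMesh n ∩ Set.Ico x 1
      = (fun k : ℕ => (k : ℝ) / 2 ^ n) '' Set.Icc ⌈x * 2 ^ n⌉₊ (2 ^ n - 1) := by
  have h2 : (0:ℝ) < (2:ℝ) ^ n := by positivity
  ext y
  simp only [dyadicMesh, Set.mem_inter_iff, Set.mem_setOf_eq, Set.mem_Ico,
    Set.mem_image, Set.mem_Icc]
  constructor
  · rintro ⟨⟨k, hk1, hk2, rfl⟩, hxy, hy1⟩
    refine ⟨k, ⟨Nat.ceil_le.mpr ?_, hk2⟩, rfl⟩
    calc x * 2^n ≤ (k:ℝ)/2^n * 2^n := by exact mul_le_mul_of_nonneg_right hxy h2.le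
    _ = (k:ℝ) := by field_simp
  · rintro ⟨k, ⟨hk1, hk2⟩, rfl⟩
    have hceil : 1 ≤ ⌈x * 2^n⌉₊ := Nat.one_le_ceil_iff.mpr (by positivity)
    have hk1' : 1 ≤ k := le_trans hceil hk1
    have hxk : x * 2^n ≤ (k:ℝ) := le_trans (Nat.le_ceil _) (by exact_mod_cast hk1)
    have hklt : k < 2^n := by
      have : 1 ≤ (2:ℕ)^n := Nat.one_le_two_pow
      omega
    refine ⟨⟨k, hk1', hk2, rfl⟩, by rw [le_div_iff₀ h2]; exact hxk, ?_⟩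
    rw [div_lt_one h2]
    exact_mod_cast hklt

lemma image_inter_Ioi (n : ℕ) (s : Set ℕ) (j : ℕ) :
    ((fun k : ℕ => (k : ℝ) / 2 ^ n) '' s) ∩ Set.Ioi ((j:ℝ)/2^n)
      = (fun k : ℕ => (k : ℝ) / 2 ^ n) '' {k ∈ s | j < k} := by
  ext y
  simp only [Set.mem_inter_iff, Set.mem_image, Set.mem_Ioi, Set.mem_setOf_eq]
  constructor
  · rintro ⟨⟨k, hk, rfl⟩, hlt⟩
    exact ⟨k, ⟨hk, (fmono n).lt_iff_lt.mp hlt⟩, rfl⟩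
  · rintro ⟨k, ⟨hk, hjk⟩, rfl⟩
    exact ⟨⟨k, hk, rfl⟩, (fmono n) hjk⟩

lemma image_inter_Iio (n : ℕ) (s : Set ℕ) (j : ℕ) :
    ((fun k : ℕ => (k : ℝ) / 2 ^ n) '' s) ∩ Set.Iio ((j:ℝ)/2^n)
      = (fun k : ℕ => (k : ℝ) / 2 ^ n) '' {k ∈ s | k < j} := by
  ext y
  simp only [Set.mem_inter_iff, Set.mem_image, Set.mem_Iio, Set.mem_setOf_eq]
  constructor
  · rintro ⟨⟨k, hk, rfl⟩, hlt⟩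
    exact ⟨k, ⟨hk, (fmono n).lt_iff_lt.mp hlt⟩, rfl⟩
  · rintro ⟨k, ⟨hk, hjk⟩, rfl⟩
    exact ⟨⟨k, hk, rfl⟩, (fmono n) hjk⟩

lemma ncard_image_Icc (n a b : ℕ) :
    ((fun k : ℕ => (k : ℝ) / 2 ^ n) '' Set.Icc a b).ncard = b + 1 - a := by
  rw [Set.ncard_image_of_injective _ (fmono n).injective, ← Finset.coe_Icc,
    Set.ncard_coe_finset, Nat.card_Icc]

lemma fourth_largest (n : ℕ) {x : ℝ} (hx0 : 0 < x) (hx1 : x < 1) {p : ℝ}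
    (hp : p ∈ dyadicMesh n ∩ Set.Ioc 0 x)
    (h3 : ((dyadicMesh n ∩ Set.Ioc 0 x) ∩ Set.Ioi p).ncard = 3) :
    ∃ j : ℕ, p = (j:ℝ)/2^n ∧ 1 ≤ j ∧ j + 3 = ⌊x * 2 ^ n⌋₊ := by
  rw [mesh_Ioc n x hx0 hx1] at hp h3
  obtain ⟨j, ⟨hj1, hjK⟩, rfl⟩ := hp
  rw [image_inter_Ioi] at h3
  have hset : {k ∈ Set.Icc 1 ⌊x * 2 ^ n⌋₊ | j < k} = Set.Icc (j+1) ⌊x * 2 ^ n⌋₊ := by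
    ext k; simp only [Set.mem_setOf_eq, Set.mem_Icc]; omega
  rw [hset, ncard_image_Icc] at h3
  exact ⟨j, rfl, hj1, by omega⟩

lemma fourth_smallest (n : ℕ) {x : ℝ} (hx0 : 0 < x) (hx1 : x < 1) {q : ℝ}
    (hq : q ∈ dyadicMesh n ∩ Set.Ico x 1)
    (h3 : ((dyadicMesh n ∩ Set.Ico x 1) ∩ Set.Iio q).ncard = 3) :
    ∃ j : ℕ, q = (j:ℝ)/2^n ∧ j = ⌈x * 2 ^ n⌉₊ + 3 := by
  rw [mesh_Ico n x hx0 hx1] at hq h3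
  obtain ⟨j, ⟨hjC, hjM⟩, rfl⟩ := hq
  rw [image_inter_Iio] at h3
  have hC1 : 1 ≤ ⌈x * 2^n⌉₊ := Nat.one_le_ceil_iff.mpr (by positivity)
  have hset : {k ∈ Set.Icc ⌈x * 2 ^ n⌉₊ (2^n - 1) | k < j} = Set.Icc ⌈x * 2 ^ n⌉₊ (j-1) := by
    ext k; simp only [Set.mem_setOf_eq, Set.mem_Icc]; omega
  rw [hset, ncard_image_Icc] at h3
  exact ⟨j, rfl, by omega⟩

/-- Contraction ratio 4/7 between consecutive dyadic meshes (Claim 3):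
refining the mesh brings the 4th closest mesh point on either side of `x`
at least a factor `4/7` closer to `x`.  The "4th largest element `p` of a
set `S`" is characterized by `p ∈ S` together with `S ∩ (p, ∞)` having
exactly 3 elements (symmetrically for "4th smallest"). -/
theorem dyadic_mesh_contraction
    (x : ℝ) (hx : x ∈ Set.Ioo (0 : ℝ) 1) (m : ℕ) (hm : 1 ≤ m) :
    (∀ p p' : ℝ,
      4 ≤ (dyadicMesh (m - 1) ∩ Set.Ioc 0 x).ncard →
      p ∈ dyadicMesh m ∩ Set.Ioc 0 x →
      ((dyadicMesh m ∩ Set.Ioc 0 x) ∩ Set.Ioi p).ncard = 3 →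
      p' ∈ dyadicMesh (m - 1) ∩ Set.Ioc 0 x →
      ((dyadicMesh (m - 1) ∩ Set.Ioc 0 x) ∩ Set.Ioi p').ncard = 3 →
      x - p ≤ 4 / 7 * (x - p')) ∧
    (∀ q q' : ℝ,
      4 ≤ (dyadicMesh (m - 1) ∩ Set.Ico x 1).ncard →
      q ∈ dyadicMesh m ∩ Set.Ico x 1 →
      ((dyadicMesh m ∩ Set.Ico x 1) ∩ Set.Iio q).ncard = 3 →
      q' ∈ dyadicMesh (m - 1) ∩ Set.Ico x 1 →
      ((dyadicMesh (m - 1) ∩ Set.Ico x 1) ∩ Set.Iio q').ncard = 3 →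
      q - x ≤ 4 / 7 * (q' - x)) := by
  obtain ⟨hx0, hx1⟩ := hx
  obtain ⟨n, rfl⟩ : ∃ n, m = n + 1 := ⟨m - 1, by omega⟩
  simp only [Nat.add_sub_cancel]
  have h2 : (0:ℝ) < (2:ℝ)^n := by positivity
  have e2 : (2:ℝ)^(n+1) = 2^n * 2 := pow_succ 2 n
  constructor
  · intro p p' _ hp h3 hp' h3'
    obtain ⟨j, rfl, hj1, hjK⟩ := fourth_largest (n+1) hx0 hx1 hp h3
    obtain ⟨i, rfl, hi1, hiK⟩ := fourth_largest n hx0 hx1 hp' h3'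
    have hiR : ((i:ℝ) + 3) ≤ x * 2^n := by
      have := Nat.floor_le (a := x * 2^n) (by positivity)
      rw [← hiK] at this; push_cast at this; linarith
    have hA : ((j:ℝ) + 3) ≤ x * 2^(n+1) := by
      have := Nat.floor_le (a := x * 2^(n+1)) (by positivity)
      rw [← hjK] at this; push_cast at this; linarith
    have hB : x * 2^(n+1) < (j:ℝ) + 4 := by
      have := Nat.lt_floor_add_one (x * 2^(n+1))
      rw [← hjK] at this; push_cast at this; linarith
    have hC : 2*(i:ℝ) + 6 ≤ (j:ℝ) + 3 := by
      have hn : 2*(i+3) ≤ ⌊x * 2^(n+1)⌋₊ := by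
        apply Nat.le_floor
        push_cast
        rw [e2]; nlinarith
      rw [← hjK] at hn; exact_mod_cast hn
    rw [← mul_le_mul_iff_right₀ (show (0:ℝ) < 14 * 2^n by positivity)]
    have eL : 14 * (2:ℝ)^n * (x - (j:ℝ)/2^(n+1)) = 7 * (x * 2^(n+1)) - 7*j := by
      rw [e2]; field_simp; ring
    have eR : 14 * (2:ℝ)^n * (4/7 * (x - (i:ℝ)/2^n)) = 8 * (x * 2^n) - 8*i := by
      field_simp; ring
    rw [eL, eR, e2]
    nlinarith [hA, hB, hC]
  · intro q q' _ hq h3 hq' h3'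
    obtain ⟨j, rfl, hjC⟩ := fourth_smallest (n+1) hx0 hx1 hq h3
    obtain ⟨i, rfl, hiC⟩ := fourth_smallest n hx0 hx1 hq' h3'
    have hiR : x * 2^n ≤ (i:ℝ) - 3 := by
      have := Nat.le_ceil (x * 2^n)
      rw [hiC]; push_cast; linarith
    have hA : x * 2^(n+1) ≤ (j:ℝ) - 3 := by
      have := Nat.le_ceil (x * 2^(n+1))
      rw [hjC]; push_cast; linarith
    have hB : (j:ℝ) - 3 < x * 2^(n+1) + 1 := by
      have := Nat.ceil_lt_add_one (a := x * 2^(n+1)) (by positivity)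
      rw [hjC]; push_cast; linarith
    have hC : (j:ℝ) - 3 ≤ 2*(i:ℝ) - 6 := by
      have hn : ⌈x * 2^(n+1)⌉₊ ≤ 2*⌈x * 2^n⌉₊ := by
        apply Nat.ceil_le.mpr
        push_cast
        rw [e2]; nlinarith [Nat.le_ceil (x * 2^n)]
      have hn' := (Nat.cast_le (α := ℝ)).mpr hn
      rw [hjC, hiC]; push_cast; push_cast at hn'; linarith
    rw [← mul_le_mul_iff_right₀ (show (0:ℝ) < 14 * 2^n by positivity)]
    have eL : 14 * (2:ℝ)^n * ((j:ℝ)/2^(n+1) - x) = 7*j - 7 * (x * 2^(n+1)) := by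
      rw [e2]; field_simp; ring
    have eR : 14 * (2:ℝ)^n * (4/7 * ((i:ℝ)/2^n - x)) = 8*i - 8 * (x * 2^n) := by
      field_simp; ring
    rw [eL, eR, e2]
    nlinarith [hA, hB, hC]
end
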